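/- arXiv:2109.03678 — 2 statements merged into one kernel-verified Lean document; each statement's English description precedes it below -/
import Mathlib

section
/- Let A be an m×n matrix with nonnegative entries, β > 0, ω > 0, η > 0, and L > 0 with 4ω(1+β)/(βL) ≤ 1, and let B = [−ω, 0]^n. Let x ∈ ℝ^n, z₀ ∈ B, define z ∈ B coordinatewise by z_i = Π_{[−ω,0]}( (z₀)_i − ωη ∇̄_i f_r(x) ) (Euclidean projection onto [−ω,0]), and set y = x + (1/(ηL))(z − z₀). Then f_r(x) − f_r(y) ≥ (1/2)⟨∇f_r(x), x − y⟩ ≥ 0. -/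
open scoped BigOperators

/-- The regularized objective `f_r` for the 1-fair packing problem. -/
noncomputable def fr {m n : ℕ} (A : Matrix (Fin m) (Fin n) ℝ) (β : ℝ)
    (x : Fin n → ℝ) : ℝ :=
  -(∑ j, x j) + (β / (1 + β)) *
    ∑ i, (A.mulVec (fun j => Real.exp (x j)) i) ^ ((1 + β) / β)

/-- The `j`-th coordinate of the gradient of `f_r`. -/
noncomputable def gradFr {m n : ℕ} (A : Matrix (Fin m) (Fin n) ℝ) (β : ℝ)
    (x : Fin n → ℝ) (j : Fin n) : ℝ :=
  -1 + ∑ i, (A.mulVec (fun j' => Real.exp (x j')) i) ^ (1 / β) * A i j * Real.exp (x j)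

section helpers
open Real

lemma exp_quad_bound {t : ℝ} (ht : |t| ≤ 1) : Real.exp t ≤ 1 + t + (3/4) * t^2 := by
  have h := Real.exp_bound ht (by norm_num : 0 < 2)
  have h2 : |Real.exp t - (1 + t)| ≤ |t|^2 * (3/4) := by
    convert h using 2
    · simp [Finset.sum_range_succ]
    · norm_num
  have := abs_le.1 h2
  have habs : |t|^2 = t^2 := sq_abs t
  nlinarith [this.2]

lemma key_scalar {p u : ℝ} (hp : 1 ≤ p) (hu : |u| ≤ 19/64) (hpu : p * |u| ≤ 19/64) :
    (1+u) ^ p ≤ 1 + p*u + (29/40) * (p*(p-1)*u^2) := by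
  have hK : (29:ℝ)/40 = 29/40 := rfl
  set F : ℝ → ℝ := fun v => 1 + p*v + (29/40)*(p*(p-1)*v^2) - (1+v)^p with hF
  have habs := abs_le.1 hu
  have hp0 : 0 ≤ p - 1 := by linarith
  have hder : ∀ v : ℝ, -1 < v → HasDerivAt F (p + (29/40)*(p*(p-1)*(2*v)) - p*(1+v)^(p-1)) v := by
    intro v hv
    have h1 : HasDerivAt (fun w : ℝ => (1+w)^p) (p*(1+v)^(p-1)) v := by
      have := (Real.hasDerivAt_rpow_const (x := 1+v) (p := p) (Or.inr hp)).comp v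
        ((hasDerivAt_id v).const_add 1)
      exact this.congr_deriv (by ring)
    have h2 : HasDerivAt (fun w : ℝ => 1 + p*w + (29/40)*(p*(p-1)*w^2))
        (p + (29/40)*(p*(p-1)*(2*v))) v := by
      have ha : HasDerivAt (fun w : ℝ => w^2) (2*v) v := by
        simpa using (hasDerivAt_pow 2 v)
      have := (((hasDerivAt_id v).const_mul p).const_add 1).add
        ((ha.const_mul (p*(p-1))).const_mul (29/40:ℝ))
      exact this.congr_deriv (by ring)
    exact h2.sub h1
  have hF0 : F 0 = 0 := by simp [hF]
  have goal : 0 ≤ F u := by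
    rcases le_or_gt 0 u with hu0 | hu0
    · -- monotone on [0,u]
      have hmono : MonotoneOn F (Set.Icc 0 u) := by
        apply monotoneOn_of_deriv_nonneg (convex_Icc 0 u)
        · intro v hv
          exact (hder v (by have := hv.1; linarith)).continuousAt.continuousWithinAt
        · intro v hv
          rw [interior_Icc] at hv
          exact (hder v (by have := hv.1; linarith)).differentiableAt.differentiableWithinAt
        · intro v hv
          rw [interior_Icc] at hv
          obtain ⟨hv1, hv2⟩ := hv
          rw [(hder v (by linarith)).deriv]
          -- need (1+v)^(p-1) ≤ 1 + 2K(p-1)v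
          have hb1 : (1+v)^(p-1) ≤ Real.exp ((p-1)*v) := by
            calc (1+v)^(p-1) ≤ (Real.exp v)^(p-1) :=
                  Real.rpow_le_rpow (by linarith) (by linarith [Real.add_one_le_exp v]) hp0
              _ = Real.exp ((p-1)*v) := by
                  rw [Real.rpow_def_of_pos (Real.exp_pos v), Real.log_exp, mul_comm]
          have ht : |(p-1)*v| ≤ 1 := by
            rw [abs_of_nonneg (by positivity)]
            nlinarith [abs_nonneg u, le_abs_self u]
          have hb2 : Real.exp ((p-1)*v) ≤ 1 + (p-1)*v + (3/4)*((p-1)*v)^2 :=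
            exp_quad_bound ht
          have htb : (p-1)*v ≤ 19/64 := by nlinarith [le_abs_self u]
          have : (1+v)^(p-1) ≤ 1 + 2*(29/40:ℝ)*((p-1)*v) := by
            have h34 : (3/4)*((p-1)*v)^2 ≤ (2*(29/40:ℝ) - 1)*((p-1)*v) := by
              rw [hK]; nlinarith [mul_nonneg hp0 hv1.le]
            calc (1+v)^(p-1) ≤ 1 + (p-1)*v + (3/4)*((p-1)*v)^2 := hb1.trans hb2
              _ ≤ 1 + 2*(29/40:ℝ)*((p-1)*v) := by linarith
          nlinarith [this, hp, mul_le_mul_of_nonneg_left this (by linarith : (0:ℝ) ≤ p)]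
      have := hmono (Set.left_mem_Icc.2 hu0) (Set.right_mem_Icc.2 hu0) hu0
      rwa [hF0] at this
    · -- antitone on [u,0]
      have hanti : AntitoneOn F (Set.Icc u 0) := by
        apply antitoneOn_of_deriv_nonpos (convex_Icc u 0)
        · intro v hv
          exact (hder v (by have := hv.1; linarith)).continuousAt.continuousWithinAt
        · intro v hv
          rw [interior_Icc] at hv
          exact (hder v (by have := hv.1; linarith)).differentiableAt.differentiableWithinAt
        · intro v hv
          rw [interior_Icc] at hv
          obtain ⟨hv1, hv2⟩ := hv
          have hv1' : -(19:ℝ)/64 ≤ v := by linarith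
          have hvpos : (0:ℝ) < 1 + v := by linarith
          rw [(hder v (by linarith)).deriv]
          -- need 1 + 2K(p-1)v ≤ (1+v)^(p-1)
          have hlog : v/(1+v) ≤ Real.log (1+v) := by
            have h1 := Real.one_sub_inv_le_log_of_pos hvpos
            have h2 : 1 - (1+v)⁻¹ = v/(1+v) := by field_simp; ring
            linarith [h2 ▸ h1]
          have hkey : 2*(29/40:ℝ)*v ≤ v/(1+v) := by
            rw [le_div_iff₀ hvpos]
            nlinarith
          have hlb : 1 + 2*(29/40:ℝ)*((p-1)*v) ≤ (1+v)^(p-1) := by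
            have e1 : (1+v)^(p-1) = Real.exp (Real.log (1+v) * (p-1)) :=
              Real.rpow_def_of_pos hvpos (p-1)
            have e2 : Real.log (1+v) * (p-1) + 1 ≤ Real.exp (Real.log (1+v) * (p-1)) :=
              Real.add_one_le_exp _
            have e3 : (v/(1+v)) * (p-1) ≤ Real.log (1+v) * (p-1) :=
              mul_le_mul_of_nonneg_right hlog hp0
            have e4 : (2*(29/40:ℝ)*v) * (p-1) ≤ (v/(1+v)) * (p-1) :=
              mul_le_mul_of_nonneg_right hkey hp0
            have e5 : 2*(29/40:ℝ)*((p-1)*v) = 2*(29/40:ℝ)*v*(p-1) := by ring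
            rw [e1, e5]; linarith
          nlinarith [mul_le_mul_of_nonneg_left hlb (by linarith : (0:ℝ) ≤ p)]
      have := hanti (Set.left_mem_Icc.2 hu0.le) (Set.right_mem_Icc.2 hu0.le) hu0.le
      rwa [hF0] at this
  simp only [hF] at goal
  linarith


lemma poly_ineq (p : ℝ) (hp : 1 ≤ p) : (3/4) + (29/40)*(p-1)*(1+3/(16*p))^2 ≤ p := by
  have hp0 : 0 < p := by linarith
  have h1 : (1+3/(16*p)) = (16*p+3)/(16*p) := by field_simp
  rw [h1, div_pow, ← sub_nonneg]
  have h2 : p - (3/4 + 29/40*(p-1)*((16*p+3)^2/(16*p)^2))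
      = (2816*p^3 - 3040*p^2 + 2523*p + 261) / (10240*p^2) := by
    field_simp
    ring
  rw [h2]
  apply div_nonneg _ (by positivity)
  nlinarith [mul_nonneg hp0.le (sq_nonneg (p - 95/176)), hp0.le, sq_nonneg p]

lemma poly_ineq' (p : ℝ) (hp : 1 ≤ p) :
    p * (3/4) + (29/40)*p*(p-1)*(1+3/(16*p))^2 ≤ p^2 := by
  have h := mul_le_mul_of_nonneg_left (poly_ineq p hp) (by linarith : (0:ℝ) ≤ p)
  nlinarith [h]

lemma row_bound {n : ℕ} (p : ℝ) (hp : 1 < p) (a h : Fin n → ℝ) (ha : ∀ j, 0 ≤ a j)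
    (hh : ∀ j, |h j| ≤ 1/(4*p)) :
    (∑ j, a j * Real.exp (h j)) ^ p - (∑ j, a j) ^ p ≤
      p * (∑ j, a j)^(p-1) * (∑ j, a j * h j) +
      p^2 * (∑ j, a j)^(p-1) * (∑ j, a j * (h j)^2) := by
  have hp1 : (1:ℝ) ≤ p := hp.le
  have hp0 : (0:ℝ) < p := by linarith
  set B := ∑ j, a j with hB
  set By := ∑ j, a j * Real.exp (h j) with hBy
  set S1 := ∑ j, a j * h j with hS1
  set S2 := ∑ j, a j * (h j)^2 with hS2
  set T := ∑ j, a j * |h j| with hT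
  have hBnn : 0 ≤ B := Finset.sum_nonneg fun j _ => ha j
  have hhe : ∀ j, |h j| ≤ 1 := fun j => (hh j).trans (by rw [div_le_one (by positivity)]; linarith)
  -- lower and upper bounds on By
  have hlow : B + S1 ≤ By := by
    rw [hB, hS1, hBy, ← Finset.sum_add_distrib]
    apply Finset.sum_le_sum
    intro j _
    have := Real.add_one_le_exp (h j)
    nlinarith [ha j]
  have hhigh : By ≤ B + S1 + (3/4) * S2 := by
    rw [hB, hS1, hS2, hBy, Finset.mul_sum, ← Finset.sum_add_distrib, ← Finset.sum_add_distrib]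
    apply Finset.sum_le_sum
    intro j _
    have := exp_quad_bound (hhe j)
    nlinarith [ha j]
  have hS1T : |S1| ≤ T := by
    rw [hS1, hT]
    refine (Finset.abs_sum_le_sum_abs _ _).trans ?_
    apply Finset.sum_le_sum
    intro j _
    rw [abs_mul, abs_of_nonneg (ha j)]
  have hS2nn : 0 ≤ S2 := Finset.sum_nonneg fun j _ => mul_nonneg (ha j) (sq_nonneg _)
  have hTnn : 0 ≤ T := Finset.sum_nonneg fun j _ => mul_nonneg (ha j) (abs_nonneg _)
  have hS2T : S2 ≤ (1/(4*p)) * T := by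
    rw [hS2, hT, Finset.mul_sum]
    apply Finset.sum_le_sum
    intro j _
    have h1 : a j * (h j)^2 = (a j * |h j|) * |h j| := by
      rw [← sq_abs, sq]; ring
    rw [h1]
    calc (a j * |h j|) * |h j| ≤ (a j * |h j|) * (1/(4*p)) :=
          mul_le_mul_of_nonneg_left (hh j) (mul_nonneg (ha j) (abs_nonneg _))
      _ = 1/(4*p) * (a j * |h j|) := by ring
  have hTB : T ≤ (1/(4*p)) * B := by
    rw [hT, hB, Finset.mul_sum]
    apply Finset.sum_le_sum
    intro j _
    calc a j * |h j| ≤ a j * (1/(4*p)) := mul_le_mul_of_nonneg_left (hh j) (ha j)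
      _ = 1/(4*p) * a j := by ring
  have hCS : T^2 ≤ B * S2 := by
    rw [hT, hB, hS2]
    have := Finset.sum_mul_sq_le_sq_mul_sq Finset.univ
      (fun j => Real.sqrt (a j)) (fun j => Real.sqrt (a j) * |h j|)
    calc (∑ j, a j * |h j|)^2
        = (∑ j, Real.sqrt (a j) * (Real.sqrt (a j) * |h j|))^2 := by
          congr 1; apply Finset.sum_congr rfl; intro j _
          rw [← mul_assoc, Real.mul_self_sqrt (ha j)]
      _ ≤ (∑ j, Real.sqrt (a j)^2) * ∑ j, (Real.sqrt (a j) * |h j|)^2 := this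
      _ = B * S2 := by
          rw [hB, hS2]
          congr 1
          · apply Finset.sum_congr rfl; intro j _; rw [Real.sq_sqrt (ha j)]
          · apply Finset.sum_congr rfl; intro j _
            rw [mul_pow, Real.sq_sqrt (ha j), sq_abs]
  rcases eq_or_lt_of_le hBnn with hB0 | hBpos
  · -- B = 0 : all a j = 0
    have hax : ∀ j ∈ Finset.univ, a j = 0 :=
      (Finset.sum_eq_zero_iff_of_nonneg (fun j _ => ha j)).1 hB0.symm
    have hBy0 : By = 0 := Finset.sum_eq_zero fun j hj => by rw [hax j hj]; ring
    have hS10 : S1 = 0 := Finset.sum_eq_zero fun j hj => by rw [hax j hj]; ring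
    have hS20 : S2 = 0 := Finset.sum_eq_zero fun j hj => by rw [hax j hj]; ring
    rw [hBy0, ← hB0, hS10, hS20, Real.zero_rpow (by positivity)]
    simp
  · -- B > 0
    set D := By - B with hD
    have hDub : D ≤ S1 + (3/4) * S2 := by rw [hD]; linarith
    have hDabs : |D| ≤ (1 + 3/(16*p)) * T := by
      rw [abs_le]
      constructor
      · have hS1lb : -T ≤ S1 := by
          have := abs_le.1 hS1T; linarith
        have h3T : 0 ≤ (3/(16*p)) * T := mul_nonneg (by positivity) hTnn
        have hexp : (1 + 3/(16*p)) * T = T + (3/(16*p)) * T := by ring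
        have hDlb : -T ≤ D := by rw [hD]; linarith
        linarith
      · have hS1ub : S1 ≤ T := (le_abs_self S1).trans hS1T
        have h34 : (3:ℝ)/4 * (1/(4*p)) = 3/(16*p) := by
          rw [div_mul_div_comm]; ring_nf
        have hs2 : (3/4) * S2 ≤ (3/(16*p)) * T := by
          calc (3/4) * S2 ≤ (3/4) * ((1/(4*p)) * T) :=
                mul_le_mul_of_nonneg_left hS2T (by norm_num)
            _ = (3/(16*p)) * T := by rw [← h34]; ring
        have hexp : (1 + 3/(16*p)) * T = T + (3/(16*p)) * T := by ring
        linarith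
    -- u
    set u := D / B with hu
    have h1u : 1 + u = By / B := by rw [hu, hD]; field_simp; ring
    have hBynn : 0 ≤ By := Finset.sum_nonneg fun j _ =>
      mul_nonneg (ha j) (Real.exp_pos _).le
    have h1unn : 0 ≤ 1 + u := by rw [h1u]; positivity
    have hupb : p * |u| ≤ 19/64 := by
      have habs : |u| = |D| / B := by rw [hu, abs_div, abs_of_pos hBpos]
      have hub : |u| ≤ (1 + 3/(16*p)) * (1/(4*p)) := by
        rw [habs, div_le_iff₀ hBpos]
        calc |D| ≤ (1 + 3/(16*p)) * T := hDabs
          _ ≤ (1 + 3/(16*p)) * ((1/(4*p)) * B) :=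
              mul_le_mul_of_nonneg_left hTB (by positivity)
          _ = (1 + 3/(16*p)) * (1/(4*p)) * B := by ring
      calc p * |u| ≤ p * ((1 + 3/(16*p)) * (1/(4*p))) :=
            mul_le_mul_of_nonneg_left hub hp0.le
        _ = 1/4 + 3/(64*p) := by field_simp; ring
        _ ≤ 1/4 + 3/64 := by
            have : 3/(64*p) ≤ 3/64 := by
              rw [div_le_div_iff₀ (by positivity) (by norm_num)]
              nlinarith
            linarith
        _ = 19/64 := by norm_num
    have huabs : |u| ≤ 19/64 := by
      calc |u| = 1 * |u| := (one_mul _).symm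
        _ ≤ p * |u| := mul_le_mul_of_nonneg_right hp1 (abs_nonneg u)
        _ ≤ 19/64 := hupb
    have hks := key_scalar hp1 huabs hupb
    -- By^p = B^p * (1+u)^p
    have hByp : By ^ p = B ^ p * (1+u) ^ p := by
      rw [h1u, ← Real.mul_rpow hBnn (by positivity)]
      congr 1
      field_simp
    have hBp1B : B ^ p = B ^ (p-1) * B := by
      have h := Real.rpow_add hBpos (p-1) 1
      rw [sub_add_cancel, Real.rpow_one] at h
      exact h
    have hBpnn : 0 ≤ B ^ (p-1) := Real.rpow_nonneg hBnn _
    -- main chain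
    have step1 : By ^ p - B ^ p ≤ B ^ p * (p * u) + B ^ p * ((29/40) * (p*(p-1)*u^2)) := by
      rw [hByp]
      have hm := mul_le_mul_of_nonneg_left hks (Real.rpow_nonneg hBnn p)
      have hdist : B ^ p * (1 + p*u + 29/40 * (p*(p-1)*u^2)) =
          B ^ p + B ^ p * (p * u) + B ^ p * ((29/40) * (p*(p-1)*u^2)) := by ring
      linarith
    have hBne : B ≠ 0 := ne_of_gt hBpos
    have hBu : B ^ p * u = B ^ (p-1) * D := by
      rw [hBp1B, hu, mul_assoc, mul_comm B (D/B), div_mul_cancel₀ _ hBne]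
    have hBu2 : B ^ p * u^2 = B ^ (p-1) * (D^2 / B) := by
      rw [hBp1B, hu, div_pow, mul_assoc]
      congr 1
      rw [pow_two B, ← div_div, mul_comm B (D^2/B/B), div_mul_cancel₀ _ hBne]
    have hD2B : D^2 / B ≤ (1 + 3/(16*p))^2 * S2 := by
      rw [div_le_iff₀ hBpos]
      calc D^2 = |D|^2 := (sq_abs D).symm
        _ ≤ ((1 + 3/(16*p)) * T)^2 := pow_le_pow_left₀ (abs_nonneg D) hDabs 2
        _ = (1 + 3/(16*p))^2 * T^2 := by ring
        _ ≤ (1 + 3/(16*p))^2 * (B * S2) := by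
            apply mul_le_mul_of_nonneg_left hCS (by positivity)
        _ = (1 + 3/(16*p))^2 * S2 * B := by ring
    have step2 : By ^ p - B ^ p ≤
        p * B^(p-1) * S1 + B^(p-1) * S2 * (p * (3/4) + (29/40)*p*(p-1)*(1+3/(16*p))^2) := by
      have e1 : B ^ p * (p * u) = p * (B^(p-1) * D) := by
        rw [← hBu]; ring
      have e2 : B ^ p * ((29/40) * (p*(p-1)*u^2)) =
          (29/40)*p*(p-1) * (B^(p-1) * (D^2/B)) := by
        rw [← hBu2]; ring
      have t1 : p * (B^(p-1) * D) ≤ p * (B^(p-1) * (S1 + (3/4)*S2)) := by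
        apply mul_le_mul_of_nonneg_left _ hp0.le
        exact mul_le_mul_of_nonneg_left hDub hBpnn
      have t2 : (29/40)*p*(p-1) * (B^(p-1) * (D^2/B)) ≤
          (29/40)*p*(p-1) * (B^(p-1) * ((1 + 3/(16*p))^2 * S2)) := by
        apply mul_le_mul_of_nonneg_left _
          (mul_nonneg (mul_nonneg (by norm_num) hp0.le) (by linarith))
        exact mul_le_mul_of_nonneg_left hD2B hBpnn
      calc By ^ p - B ^ p ≤ B ^ p * (p * u) + B ^ p * ((29/40) * (p*(p-1)*u^2)) := step1
        _ = p * (B^(p-1) * D) + (29/40)*p*(p-1) * (B^(p-1) * (D^2/B)) := by rw [e1, e2]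
        _ ≤ p * (B^(p-1) * (S1 + (3/4)*S2)) +
            (29/40)*p*(p-1) * (B^(p-1) * ((1 + 3/(16*p))^2 * S2)) := by linarith
        _ = p * B^(p-1) * S1 + B^(p-1) * S2 *
            (p * (3/4) + (29/40)*p*(p-1)*(1+3/(16*p))^2) := by ring
    have hpoly := poly_ineq p hp1
    have hfinal : B^(p-1) * S2 * (p * (3/4) + (29/40)*p*(p-1)*(1+3/(16*p))^2) ≤
        p^2 * B^(p-1) * S2 := by
      have hb : p * (3/4) + (29/40)*p*(p-1)*(1+3/(16*p))^2 ≤ p^2 := poly_ineq' p hp1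
      calc B^(p-1) * S2 * (p * (3/4) + (29/40)*p*(p-1)*(1+3/(16*p))^2)
          ≤ B^(p-1) * S2 * p^2 :=
            mul_le_mul_of_nonneg_left hb (mul_nonneg hBpnn hS2nn)
        _ = p^2 * B^(p-1) * S2 := by ring
    linarith


lemma coord_lemma (p ω η L g z0 z h : ℝ) (hp : 1 ≤ p) (hω : 0 < ω) (hη : 0 < η)
    (hL : 0 < L) (hstep : 4*ω*p ≤ L) (hg : -1 ≤ g) (hz0 : -ω ≤ z0) (hz0' : z0 ≤ 0)
    (hz : z = max (-ω) (min 0 (z0 - ω*η*min 1 g)))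
    (hh : h = 1/(η*L) * (z - z0)) :
    |h| ≤ 1/(4*p) ∧ g*h ≤ 0 ∧ p*h^2*(g+1) ≤ -(1/2)*(g*h) := by
  have hp0 : (0:ℝ) < p := by linarith
  set G := min 1 g with hG
  have hG1 : G ≤ 1 := min_le_left _ _
  have hGg : G ≤ g := min_le_right _ _
  have hGm1 : -1 ≤ G := le_min (by norm_num) hg
  have hηL : 0 < η * L := mul_pos hη hL
  -- key facts about d := z - z0
  have hkey : G * (z - z0) ≤ 0 ∧ |z - z0| ≤ ω * η * |G| := by
    rcases le_or_gt 0 G with hGnn | hGneg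
    · have hδ : 0 ≤ ω * η * G := by positivity
      have hmin : min 0 (z0 - ω*η*G) = z0 - ω*η*G := min_eq_right (by linarith)
      have hzlb : z0 - ω*η*G ≤ z := by rw [hz, hmin]; exact le_max_right _ _
      have hzub : z ≤ z0 := by
        rw [hz, hmin]; exact max_le (by linarith) (by linarith)
      constructor
      · exact mul_nonpos_of_nonneg_of_nonpos hGnn (by linarith)
      · rw [abs_of_nonneg hGnn, abs_of_nonpos (by linarith)]
        linarith
    · have hδ : ω * η * G < 0 := by
        apply mul_neg_of_pos_of_neg (by positivity) hGneg
      have hmax : max (-ω) (min 0 (z0 - ω*η*G)) = min 0 (z0 - ω*η*G) := by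
        apply max_eq_right
        apply le_min (by linarith) (by linarith)
      have hzlb : z0 ≤ z := by
        rw [hz, hmax]; exact le_min (by linarith) (by linarith)
      have hzub : z ≤ z0 - ω*η*G := by
        rw [hz, hmax]; exact min_le_right _ _
      constructor
      · exact mul_nonpos_of_nonpos_of_nonneg hGneg.le (by linarith)
      · rw [abs_of_neg hGneg, abs_of_nonneg (by linarith)]
        linarith
  obtain ⟨hGd, hdabs⟩ := hkey
  have hGh : G * h ≤ 0 := by
    rw [hh]
    calc G * (1/(η*L) * (z - z0)) = 1/(η*L) * (G * (z - z0)) := by ring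
      _ ≤ 0 := mul_nonpos_of_nonneg_of_nonpos (by positivity) hGd
  have habsh : |h| ≤ (ω/L) * |G| := by
    rw [hh, abs_mul, abs_of_nonneg (by positivity : (0:ℝ) ≤ 1/(η*L))]
    calc 1/(η*L) * |z - z0| ≤ 1/(η*L) * (ω * η * |G|) :=
          mul_le_mul_of_nonneg_left hdabs (by positivity)
      _ = (ω * η / (η * L)) * |G| := by ring
      _ = (ω/L) * |G| := by
          rw [show ω * η / (η * L) = ω / L from by
            rw [mul_comm ω η, mul_div_mul_left _ _ (ne_of_gt hη)]]
  have hGabs : |G| ≤ 1 := abs_le.2 ⟨hGm1, hG1⟩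
  have hωL : ω / L ≤ 1/(4*p) := by
    rw [div_le_div_iff₀ hL (by positivity)]
    linarith
  have hωLnn : (0:ℝ) ≤ ω / L := by positivity
  have hi : |h| ≤ 1/(4*p) := by
    calc |h| ≤ (ω/L) * |G| := habsh
      _ ≤ (ω/L) * 1 := mul_le_mul_of_nonneg_left hGabs hωLnn
      _ = ω/L := mul_one _
      _ ≤ 1/(4*p) := hωL
  have hpωL : p * (ω/L) ≤ 1/4 := by
    rw [mul_div_assoc', div_le_iff₀ hL]
    linarith
  rcases le_or_gt g 1 with hg1 | hg1
  · -- G = g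
    have hGeq : G = g := min_eq_right hg1
    rw [hGeq] at hGh habsh
    have hgh : g * h = -(|g| * |h|) := by
      rw [← abs_mul, abs_of_nonpos hGh]; ring
    refine ⟨hi, hGh, ?_⟩
    have h2 : h^2 = |h| * |h| := by rw [← sq_abs h, sq]
    have hb1 : p * |h| ≤ (1/4) * |g| := by
      calc p * |h| ≤ p * ((ω/L) * |g|) := mul_le_mul_of_nonneg_left habsh hp0.le
        _ = (p * (ω/L)) * |g| := by ring
        _ ≤ (1/4) * |g| := mul_le_mul_of_nonneg_right hpωL (abs_nonneg g)
    have hgp1 : g + 1 ≤ 2 := by linarith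
    have : p*h^2*(g+1) ≤ (1/2) * (|g| * |h|) := by
      rw [h2]
      have key := mul_le_mul_of_nonneg_right hb1 (abs_nonneg h)
      have hnn : 0 ≤ p * (|h| * |h|) := by positivity
      nlinarith [key, hnn, mul_le_mul_of_nonneg_left hgp1 hnn]
    rw [hgh]; linarith
  · -- g > 1, G = 1
    have hGeq : G = 1 := min_eq_left hg1.le
    rw [hGeq] at hGh habsh
    have hhneg : h ≤ 0 := by linarith [hGh]
    have hgh : g * h ≤ 0 := mul_nonpos_of_nonneg_of_nonpos (by linarith) hhneg
    refine ⟨hi, hgh, ?_⟩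
    have habs : |h| = -h := abs_of_nonpos hhneg
    have habsh' : |h| ≤ ω/L := by rw [abs_one, mul_one] at habsh; exact habsh
    have hb1 : p * |h| ≤ 1/4 := by
      calc p * |h| ≤ p * (ω/L) := mul_le_mul_of_nonneg_left habsh' hp0.le
        _ ≤ 1/4 := hpωL
    have hgp1 : g + 1 ≤ 2*g := by linarith
    have h2 : h^2 = |h| * |h| := by rw [← sq_abs h, sq]
    have : p*h^2*(g+1) ≤ (1/2) * (g * |h|) := by
      rw [h2]
      have key := mul_le_mul_of_nonneg_right hb1 (abs_nonneg h)
      have hnn : 0 ≤ p * (|h| * |h|) := by positivity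
      have key2 := mul_le_mul_of_nonneg_right key (by linarith : (0:ℝ) ≤ g)
      calc p * (|h| * |h|) * (g+1) ≤ p * (|h| * |h|) * (2*g) :=
            mul_le_mul_of_nonneg_left hgp1 hnn
        _ = 2*(p * |h| * |h| * g) := by ring
        _ ≤ 2*(1/4 * |h| * g) := by linarith
        _ = (1/2)*(g * |h|) := by ring
    rw [habs] at this
    linarith

end helpers

/-- Descent Lemma: the gradient-descent point `y` obtained from the projected
(mirror-descent) step on the truncated gradient satisfies the strong descent
condition `f_r(x) - f_r(y) ≥ (1/2)⟨∇f_r(x), x - y⟩ ≥ 0`. -/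
theorem descent_lemma_coord_descent {m n : ℕ}
    (A : Matrix (Fin m) (Fin n) ℝ)
    (hA : ∀ i j, 0 ≤ A i j)
    (β ω η L : ℝ) (hβ : 0 < β) (hω : 0 < ω) (hη : 0 < η) (hL : 0 < L)
    (hstep : 4 * ω * (1 + β) / (β * L) ≤ 1)
    (x z0 z y : Fin n → ℝ)
    (hz0 : ∀ i, z0 i ∈ Set.Icc (-ω) 0)
    (hz : ∀ i, z i = max (-ω) (min 0 (z0 i - ω * η * min 1 (gradFr A β x i))))
    (hy : y = x + (1 / (η * L)) • (z - z0)) :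
    (1 / 2) * ∑ i, gradFr A β x i * (x i - y i) ≤ fr A β x - fr A β y ∧
    0 ≤ (1 / 2) * ∑ i, gradFr A β x i * (x i - y i) := by
  classical
  have hβ1 : (0:ℝ) < 1 + β := by linarith
  set p : ℝ := (1+β)/β with hpdef
  have hp : 1 < p := by
    rw [hpdef, lt_div_iff₀ hβ]; linarith
  have hp1 : (1:ℝ) ≤ p := hp.le
  have hp0 : (0:ℝ) < p := by linarith
  have hpm1 : p - 1 = 1/β := by
    rw [hpdef]; field_simp; ring
  have hcp : β/(1+β) = 1/p := by
    rw [hpdef, one_div_div]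
  have hstep' : 4*ω*p ≤ L := by
    rw [div_le_one (by positivity)] at hstep
    rw [hpdef, mul_div_assoc', div_le_iff₀ hβ]
    linarith
  set g : Fin n → ℝ := gradFr A β x with hgdef
  set h : Fin n → ℝ := fun j => y j - x j with hhdef
  have hyj : ∀ j, h j = 1/(η*L) * (z j - z0 j) := by
    intro j
    simp only [hhdef, hy, Pi.add_apply, Pi.smul_apply, Pi.sub_apply, smul_eq_mul]
    ring
  set B : Fin m → ℝ := fun i => ∑ j, A i j * Real.exp (x j) with hBdef
  have hBmv : ∀ i, A.mulVec (fun j => Real.exp (x j)) i = B i := fun i => rfl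
  have hBnn : ∀ i, 0 ≤ B i := fun i =>
    Finset.sum_nonneg fun j _ => mul_nonneg (hA i j) (Real.exp_pos _).le
  set s : Fin n → ℝ := fun j => ∑ i, (B i)^(1/β) * A i j * Real.exp (x j) with hsdef
  have hsnn : ∀ j, 0 ≤ s j := fun j =>
    Finset.sum_nonneg fun i _ =>
      mul_nonneg (mul_nonneg (Real.rpow_nonneg (hBnn i) _) (hA i j)) (Real.exp_pos _).le
  have hgj : ∀ j, g j = -1 + s j := by
    intro j
    simp only [hgdef, gradFr, hsdef]
    rfl
  have hgm1 : ∀ j, -1 ≤ g j := by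
    intro j; rw [hgj]; linarith [hsnn j]
  have hcoord : ∀ j, |h j| ≤ 1/(4*p) ∧ g j * h j ≤ 0 ∧
      p*(h j)^2*(g j + 1) ≤ -(1/2)*(g j * h j) := fun j =>
    coord_lemma p ω η L (g j) (z0 j) (z j) (h j) hp1 hω hη hL hstep' (hgm1 j)
      (hz0 j).1 (hz0 j).2 (hz j) (hyj j)
  have hxy : ∀ j, x j - y j = -(h j) := by
    intro j; simp only [hhdef]; ring
  -- second conjunct
  have hsec : 0 ≤ (1 / 2) * ∑ j, g j * (x j - y j) := by
    apply mul_nonneg (by norm_num)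
    apply Finset.sum_nonneg
    intro j _
    rw [hxy j, mul_neg]
    linarith [(hcoord j).2.1]
  refine ⟨?_, hsec⟩
  -- first conjunct
  set By : Fin m → ℝ := fun i => ∑ j, (A i j * Real.exp (x j)) * Real.exp (h j) with hBydef
  have hBymv : ∀ i, A.mulVec (fun j => Real.exp (y j)) i = By i := by
    intro i
    show (∑ j, A i j * Real.exp (y j)) = ∑ j, (A i j * Real.exp (x j)) * Real.exp (h j)
    apply Finset.sum_congr rfl
    intro j _
    rw [show y j = x j + h j from by simp [hhdef], Real.exp_add]
    ring
  have hrow : ∀ i, By i ^ p - B i ^ p ≤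
      p * (B i)^(p-1) * (∑ j, (A i j * Real.exp (x j)) * h j) +
      p^2 * (B i)^(p-1) * (∑ j, (A i j * Real.exp (x j)) * (h j)^2) := fun i =>
    row_bound p hp (fun j => A i j * Real.exp (x j)) h
      (fun j => mul_nonneg (hA i j) (Real.exp_pos _).le) (fun j => (hcoord j).1)
  -- sum swaps
  have hswap1 : ∑ i, (B i)^(p-1) * (∑ j, (A i j * Real.exp (x j)) * h j)
      = ∑ j, s j * h j := by
    rw [hpm1]
    simp_rw [Finset.mul_sum]
    rw [Finset.sum_comm]
    apply Finset.sum_congr rfl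
    intro j _
    rw [hsdef]
    rw [Finset.sum_mul]
    apply Finset.sum_congr rfl
    intro i _
    ring
  have hswap2 : ∑ i, (B i)^(p-1) * (∑ j, (A i j * Real.exp (x j)) * (h j)^2)
      = ∑ j, s j * (h j)^2 := by
    rw [hpm1]
    simp_rw [Finset.mul_sum]
    rw [Finset.sum_comm]
    apply Finset.sum_congr rfl
    intro j _
    rw [hsdef]
    rw [Finset.sum_mul]
    apply Finset.sum_congr rfl
    intro i _
    ring
  -- fr difference
  have hfr : fr A β y - fr A β x = -(∑ j, h j) + (1/p) * ∑ i, (By i ^ p - B i ^ p) := by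
    simp only [fr, ← hpdef, hcp]
    have e1 : ∀ i, A.mulVec (fun j => Real.exp (y j)) i ^ p = By i ^ p := by
      intro i; rw [hBymv i]
    have e2 : ∀ i, A.mulVec (fun j => Real.exp (x j)) i ^ p = B i ^ p := by
      intro i; rw [hBmv i]
    rw [Finset.sum_congr rfl (fun i _ => e1 i), Finset.sum_congr rfl (fun i _ => e2 i)]
    have e4 : ∑ i, (By i ^ p - B i ^ p) = (∑ i, By i ^ p) - ∑ i, B i ^ p :=
      Finset.sum_sub_distrib _ _
    rw [e4]
    have e3 : ∑ j, y j = ∑ j, x j + ∑ j, h j := by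
      rw [← Finset.sum_add_distrib]
      apply Finset.sum_congr rfl
      intro j _
      simp [hhdef]
    rw [e3]
    ring
  -- chain
  have hchain : fr A β y - fr A β x ≤ ∑ j, g j * h j + p * ∑ j, s j * (h j)^2 := by
    rw [hfr]
    have hsum : (1/p) * ∑ i, (By i ^ p - B i ^ p) ≤
        ∑ j, s j * h j + p * ∑ j, s j * (h j)^2 := by
      have h1 : ∑ i, (By i ^ p - B i ^ p) ≤
          p * (∑ j, s j * h j) + p^2 * (∑ j, s j * (h j)^2) := by
        calc ∑ i, (By i ^ p - B i ^ p)
            ≤ ∑ i, (p * (B i)^(p-1) * (∑ j, (A i j * Real.exp (x j)) * h j) +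
              p^2 * (B i)^(p-1) * (∑ j, (A i j * Real.exp (x j)) * (h j)^2)) :=
              Finset.sum_le_sum fun i _ => hrow i
          _ = p * (∑ i, (B i)^(p-1) * (∑ j, (A i j * Real.exp (x j)) * h j)) +
              p^2 * (∑ i, (B i)^(p-1) * (∑ j, (A i j * Real.exp (x j)) * (h j)^2)) := by
              rw [Finset.sum_add_distrib, Finset.mul_sum, Finset.mul_sum]
              congr 1 <;> (apply Finset.sum_congr rfl; intro i _; ring)
          _ = p * (∑ j, s j * h j) + p^2 * (∑ j, s j * (h j)^2) := by
              rw [hswap1, hswap2]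
      calc (1/p) * ∑ i, (By i ^ p - B i ^ p)
          ≤ (1/p) * (p * (∑ j, s j * h j) + p^2 * (∑ j, s j * (h j)^2)) :=
            mul_le_mul_of_nonneg_left h1 (by positivity)
        _ = ∑ j, s j * h j + p * ∑ j, s j * (h j)^2 := by
            field_simp
    have hgs : -(∑ j, h j) + ∑ j, s j * h j = ∑ j, g j * h j := by
      rw [← Finset.sum_neg_distrib, ← Finset.sum_add_distrib]
      apply Finset.sum_congr rfl
      intro j _
      rw [hgj j]
      ring
    linarith
  have hlast : p * ∑ j, s j * (h j)^2 ≤ ∑ j, -(1/2) * (g j * h j) := by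
    rw [Finset.mul_sum]
    apply Finset.sum_le_sum
    intro j _
    have := (hcoord j).2.2
    have hs : s j = g j + 1 := by rw [hgj j]; ring
    rw [hs]
    calc p * ((g j + 1) * (h j)^2) = p * (h j)^2 * (g j + 1) := by ring
      _ ≤ -(1/2) * (g j * h j) := this
  have hgh : ∑ j, g j * (x j - y j) = -(∑ j, g j * h j) := by
    rw [← Finset.sum_neg_distrib]
    apply Finset.sum_congr rfl
    intro j _
    rw [hxy j]
    ring
  have hhalf : ∑ j, -(1/2) * (g j * h j) = -(1/2) * ∑ j, g j * h j := by
    rw [← Finset.mul_sum]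
  rw [hgh]
  have : fr A β y - fr A β x ≤ (1/2) * ∑ j, g j * h j := by
    rw [hhalf] at hlast
    linarith
  linarith
end

section
/- Let A be an m×n matrix with nonnegative entries, β > 0, ω > 0, L > 0 with 4ω(1+β)/(βL) ≤ 1, and η ∈ (0, 1/4], and let B = [−ω, 0]^n. Let x ∈ B, z₀ ∈ B, define z ∈ B coordinatewise by z_i = Π_{[−ω,0]}( (z₀)_i − ωη ∇̄_i f_r(x) ), set y = x + (1/(ηL))(z − z₀), let C = 3ηL and ν = ∇f_r(x) − ∇̄f_r(x) ∈ [0,∞)^n. Then for all u ∈ B: ⟨ην, z₀ − u⟩ + η²L⟨∇̄f_r(x), x − y⟩ ≤ C ( f_r(x) − f_r(y) ). -/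
open scoped BigOperators

set_option maxHeartbeats 1000000

open Finset

lemma exp_quarter_le : Real.exp (1/4 : ℝ) ≤ 4/3 := by
  have h4 : Real.exp (1/4 : ℝ) ^ (4:ℕ) = Real.exp 1 := by
    rw [← Real.exp_nat_mul]; norm_num
  have h := Real.exp_one_lt_d9
  have : Real.exp (1/4 : ℝ) ^ (4:ℕ) ≤ (4/3 : ℝ) ^ (4:ℕ) := by
    rw [h4]; nlinarith
  exact le_of_pow_le_pow_left₀ (by norm_num) (by norm_num) this

lemma exp_quad {t : ℝ} (h : |t| ≤ 1/4) : Real.exp t ≤ 1 + t + (2/3) * t^2 := by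
  have h1 : |t| ≤ 1 := h.trans (by norm_num)
  have hb := Real.exp_bound h1 (n := 3) (by norm_num)
  have hsum : (∑ m ∈ Finset.range 3, t ^ m / m.factorial) = 1 + t + t^2/2 := by
    norm_num [Finset.sum_range_succ, Nat.factorial]
  rw [hsum] at hb
  have h2 : Real.exp t - (1 + t + t^2/2) ≤ |t|^3 * (4/(6*3)) := by
    have := (abs_sub_le_iff.1 hb).1
    refine this.trans (le_of_eq ?_); norm_num [Nat.factorial]
  have h3 : |t|^3 ≤ (1/4) * t^2 := by
    have h5 : |t|^3 = |t| * |t|^2 := by ring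
    rw [h5, sq_abs]
    nlinarith [sq_nonneg t, abs_nonneg t]
  nlinarith


/-- Tangent line inequality for convex rpow: for `1 ≤ γ`, `x > 0`, `y ≥ 0`:
`x^γ + γ x^(γ-1) (y - x) ≤ y^γ`. -/
lemma tangent_ge {γ : ℝ} (hγ : 1 ≤ γ) {x y : ℝ} (hx : 0 < x) (hy : 0 ≤ y) :
    x ^ γ + γ * x ^ (γ - 1) * (y - x) ≤ y ^ γ := by
  have hs : (-1 : ℝ) ≤ y / x - 1 := by
    have : 0 ≤ y / x := div_nonneg hy hx.le
    linarith
  have hb := one_add_mul_self_le_rpow_one_add hs hγ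
  have h1 : (1 : ℝ) + (y / x - 1) = y / x := by ring
  rw [h1, Real.div_rpow hy hx.le] at hb
  have hxγ : (0:ℝ) < x ^ γ := Real.rpow_pos_of_pos hx γ
  have hid : x ^ (γ - 1) = x ^ γ / x := by
    rw [Real.rpow_sub hx, Real.rpow_one]
  rw [hid]
  have := mul_le_mul_of_nonneg_left hb hxγ.le
  calc x ^ γ + γ * (x ^ γ / x) * (y - x)
      = x ^ γ * (1 + γ * (y / x - 1)) := by field_simp
    _ ≤ x ^ γ * (y ^ γ / x ^ γ) := this
    _ = y ^ γ := by field_simp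

lemma tangent_le {γ : ℝ} (hγ0 : 0 ≤ γ) (hγ1 : γ ≤ 1) {x y : ℝ} (hx : 0 < x) (hy : 0 ≤ y) :
    y ^ γ ≤ x ^ γ + γ * x ^ (γ - 1) * (y - x) := by
  have hs : (-1 : ℝ) ≤ y / x - 1 := by
    have : 0 ≤ y / x := div_nonneg hy hx.le
    linarith
  have hb := rpow_one_add_le_one_add_mul_self hs hγ0 hγ1
  have h1 : (1 : ℝ) + (y / x - 1) = y / x := by ring
  rw [h1, Real.div_rpow hy hx.le] at hb
  have hxγ : (0:ℝ) < x ^ γ := Real.rpow_pos_of_pos hx γ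
  have hid : x ^ (γ - 1) = x ^ γ / x := by
    rw [Real.rpow_sub hx, Real.rpow_one]
  rw [hid]
  have := mul_le_mul_of_nonneg_left hb hxγ.le
  calc y ^ γ = x ^ γ * (y ^ γ / x ^ γ) := by field_simp
    _ ≤ x ^ γ * (1 + γ * (y / x - 1)) := this
    _ = x ^ γ + γ * (x ^ γ / x) * (y - x) := by field_simp

lemma core_abs {p D S b l q : ℝ} (hp : 1 < p) (hD0 : 0 ≤ D) (hD : D ≤ 1 / (4 * p))
    (hS : 0 < S) (hq0 : 0 ≤ q) (hl0 : |l| ≤ D * S) (hcs : l ^ 2 ≤ S * q)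
    (hbu : b ≤ Real.exp D * S) (hrho0 : S + l ≤ b) (hrho2 : b ≤ S + l + 2/3 * q) :
    b ^ p ≤ S ^ p + p * (S ^ (p - 1) * l) + (14/9) * p ^ 2 * (S ^ (p - 1) * q) := by
  have hp0 : (0:ℝ) < p := lt_trans one_pos hp
  have hS0 : 0 ≤ S := hS.le
  have hpD : p * D ≤ 1/4 := by
    calc p * D ≤ p * (1 / (4 * p)) := mul_le_mul_of_nonneg_left hD hp0.le
      _ = 1/4 := by field_simp
  have hD4 : D ≤ 1/4 := by nlinarith
  have hbl : (1 - D) * S ≤ b := by nlinarith [neg_abs_le l]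
  have hb0 : (0:ℝ) < b := lt_of_lt_of_le (by nlinarith) hbl
  have hSp1 : (0:ℝ) < S ^ (p-1) := Real.rpow_pos_of_pos hS _
  have hSp2 : (0:ℝ) < S ^ (p-2) := Real.rpow_pos_of_pos hS _
  have hZS : S ^ (p-2) * S = S ^ (p-1) := by
    rw [← Real.rpow_add_one (ne_of_gt hS)]
    congr 1
    ring
  have he14 := exp_quarter_le
  -- K1 : b^(p-1) ≤ (4/3) S^(p-1)
  have hK1 : b ^ (p-1) ≤ (4/3) * S ^ (p-1) := by
    calc b ^ (p-1) ≤ (Real.exp D * S) ^ (p-1) :=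
          Real.rpow_le_rpow hb0.le hbu (by linarith)
      _ = Real.exp D ^ (p-1) * S ^ (p-1) :=
          Real.mul_rpow (Real.exp_nonneg D) hS0
      _ ≤ (4/3) * S ^ (p-1) := by
          apply mul_le_mul_of_nonneg_right _ hSp1.le
          rw [← Real.exp_mul]
          calc Real.exp (D * (p-1)) ≤ Real.exp (1/4) := by
                apply Real.exp_le_exp.2
                nlinarith
            _ ≤ 4/3 := he14
  -- K2 : b^(p-2) ≤ (4/3) S^(p-2)
  have hK2 : b ^ (p-2) ≤ (4/3) * S ^ (p-2) := by
    rcases le_total 2 p with h2p | h2p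
    · calc b ^ (p-2) ≤ (Real.exp D * S) ^ (p-2) :=
            Real.rpow_le_rpow hb0.le hbu (by linarith)
        _ = Real.exp D ^ (p-2) * S ^ (p-2) :=
            Real.mul_rpow (Real.exp_nonneg D) hS0
        _ ≤ (4/3) * S ^ (p-2) := by
            apply mul_le_mul_of_nonneg_right _ hSp2.le
            rw [← Real.exp_mul]
            calc Real.exp (D * (p-2)) ≤ Real.exp (1/4) := by
                  apply Real.exp_le_exp.2
                  nlinarith
              _ ≤ 4/3 := he14
    · have h1D : (0:ℝ) < 1 - D := by linarith
      calc b ^ (p-2) ≤ ((1-D) * S) ^ (p-2) := by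
            apply Real.rpow_le_rpow_of_nonpos (by positivity) hbl (by linarith)
        _ = (1-D) ^ (p-2) * S ^ (p-2) :=
            Real.mul_rpow h1D.le hS0
        _ ≤ (4/3) * S ^ (p-2) := by
            apply mul_le_mul_of_nonneg_right _ hSp2.le
            calc (1-D) ^ (p-2) ≤ (1-D) ^ (-1 : ℝ) := by
                  apply Real.rpow_le_rpow_of_exponent_ge h1D (by linarith)
                  linarith
              _ = (1-D)⁻¹ := by rw [Real.rpow_neg_one]
              _ ≤ 4/3 := by
                  rw [inv_le_comm₀ h1D (by norm_num)]
                  linarith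
  -- cross bound
  have hγ0 : (0:ℝ) < p - 1 := by linarith
  have hcross : |b ^ (p-1) - S ^ (p-1)| ≤ (4/3) * (p-1) * (S ^ (p-2) * |b - S|) := by
    have hq12 : p - 1 - 1 = p - 2 := by ring
    rcases le_or_gt 1 (p-1) with hγ1 | hγ1
    · rcases le_total S b with hSb | hSb
      · have hmono : S ^ (p-1) ≤ b ^ (p-1) := Real.rpow_le_rpow hS0 hSb (by linarith)
        rw [abs_of_nonneg (by linarith), abs_of_nonneg (by linarith)]
        have htg := tangent_ge hγ1 hb0 hS0
        rw [hq12] at htg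
        have hKm : (p-1) * b ^ (p-2) * (b - S) ≤ (p-1) * ((4/3) * S ^ (p-2)) * (b - S) := by
          apply mul_le_mul_of_nonneg_right _ (by linarith)
          exact mul_le_mul_of_nonneg_left hK2 (by linarith)
        nlinarith
      · have hmono : b ^ (p-1) ≤ S ^ (p-1) := Real.rpow_le_rpow hb0.le hSb (by linarith)
        rw [abs_of_nonpos (by linarith), abs_of_nonpos (by linarith)]
        have htg := tangent_ge hγ1 hS (le_of_lt hb0)
        rw [hq12] at htg
        nlinarith
    · rcases le_total S b with hSb | hSb
      · have hmono : S ^ (p-1) ≤ b ^ (p-1) := Real.rpow_le_rpow hS0 hSb (by linarith)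
        rw [abs_of_nonneg (by linarith), abs_of_nonneg (by linarith)]
        have htl := tangent_le hγ0.le hγ1.le hS hb0.le
        rw [hq12] at htl
        nlinarith
      · have hmono : b ^ (p-1) ≤ S ^ (p-1) := Real.rpow_le_rpow hb0.le hSb (by linarith)
        rw [abs_of_nonpos (by linarith), abs_of_nonpos (by linarith)]
        have htl := tangent_le hγ0.le hγ1.le hb0 hS0
        rw [hq12] at htl
        have hKm : (p-1) * b ^ (p-2) * (S - b) ≤ (p-1) * ((4/3) * S ^ (p-2)) * (S - b) := by
          apply mul_le_mul_of_nonneg_right _ (by linarith)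
          exact mul_le_mul_of_nonneg_left hK2 (by linarith)
        nlinarith
  -- assemble
  have hmain : b ^ p ≤ S ^ p + p * (b ^ (p-1) * (b - S)) := by
    have := tangent_ge hp.le hb0 hS0
    nlinarith [Real.rpow_pos_of_pos hb0 (p-1)]
  -- bound the cross term : b^(p-1) * l ≤ S^(p-1) * l + (14/9)*(p-1)*(S^(p-1)*q)
  have habsl : 0 ≤ |l| := abs_nonneg l
  have hbS_abs : |b - S| ≤ |l| + (2/3) * q := by
    rw [abs_le]
    constructor
    · nlinarith [neg_abs_le l]
    · nlinarith [le_abs_self l]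
  have h3 : |b - S| * |l| ≤ (7/6) * (S * q) := by
    have e1 : |l| * |l| = l ^ 2 := by rw [← sq, sq_abs]
    have e2 : q * |l| ≤ q * (D * S) := mul_le_mul_of_nonneg_left hl0 hq0
    nlinarith [mul_le_mul_of_nonneg_right hbS_abs habsl, mul_nonneg hq0 hS0]
  have hXl : b ^ (p-1) * l ≤ S ^ (p-1) * l + (14/9) * (p-1) * (S ^ (p-1) * q) := by
    have h1 : (b ^ (p-1) - S ^ (p-1)) * l ≤ |b ^ (p-1) - S ^ (p-1)| * |l| := by
      calc (b ^ (p-1) - S ^ (p-1)) * l ≤ |(b ^ (p-1) - S ^ (p-1)) * l| := le_abs_self _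
        _ = |b ^ (p-1) - S ^ (p-1)| * |l| := abs_mul _ _
    have h2 : |b ^ (p-1) - S ^ (p-1)| * |l| ≤ (4/3) * (p-1) * (S ^ (p-2) * (|b - S| * |l|)) := by
      calc |b ^ (p-1) - S ^ (p-1)| * |l| ≤ (4/3) * (p-1) * (S ^ (p-2) * |b - S|) * |l| :=
            mul_le_mul_of_nonneg_right hcross habsl
        _ = (4/3) * (p-1) * (S ^ (p-2) * (|b - S| * |l|)) := by ring
    have h4 : (4/3) * (p-1) * (S ^ (p-2) * (|b - S| * |l|))
        ≤ (4/3) * (p-1) * (S ^ (p-2) * ((7/6) * (S * q))) := by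
      apply mul_le_mul_of_nonneg_left _ (by nlinarith : (0:ℝ) ≤ (4/3) * (p-1))
      exact mul_le_mul_of_nonneg_left h3 hSp2.le
    have h5 : S ^ (p-2) * ((7/6) * (S * q)) = (7/6) * (S ^ (p-1) * q) := by
      rw [← hZS]; ring
    rw [h5] at h4
    nlinarith
  have hXrho : b ^ (p-1) * (b - S - l) ≤ (8/9) * (S ^ (p-1) * q) := by
    have hr0 : 0 ≤ b - S - l := by linarith
    have hr2 : b - S - l ≤ (2/3) * q := by linarith
    have hb1 : (0:ℝ) < b ^ (p-1) := Real.rpow_pos_of_pos hb0 _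
    nlinarith [mul_le_mul_of_nonneg_right hK1 hr0, mul_le_mul_of_nonneg_left hr2 hSp1.le]
  have hfin1 : p * (b ^ (p-1) * l) ≤ p * (S ^ (p-1) * l + (14/9) * (p-1) * (S ^ (p-1) * q)) :=
    mul_le_mul_of_nonneg_left hXl hp0.le
  have hfin2 : p * (b ^ (p-1) * (b - S - l)) ≤ p * ((8/9) * (S ^ (p-1) * q)) :=
    mul_le_mul_of_nonneg_left hXrho hp0.le
  nlinarith [mul_nonneg hSp1.le hq0]

lemma core {n : ℕ} {p D : ℝ} (hp : 1 < p) (hD0 : 0 ≤ D) (hD : D ≤ 1 / (4 * p))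
    (a t : Fin n → ℝ) (ha : ∀ j, 0 ≤ a j) (ht : ∀ j, |t j| ≤ D) :
    (∑ j, a j * Real.exp (t j)) ^ p ≤ (∑ j, a j) ^ p
      + p * ((∑ j, a j) ^ (p - 1) * (∑ j, a j * t j))
      + (14/9) * p ^ 2 * ((∑ j, a j) ^ (p - 1) * (∑ j, a j * t j ^ 2)) := by
  have hp0 : (0:ℝ) < p := lt_trans one_pos hp
  have hD4 : D ≤ 1/4 := by
    have h1 : 4 * p * D ≤ 1 := by
      have h2 := mul_le_mul_of_nonneg_left hD (by positivity : (0:ℝ) ≤ 4*p)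
      rwa [mul_one_div, div_self (by positivity)] at h2
    nlinarith [mul_nonneg hD0 (le_of_lt (sub_pos.2 hp))]
  have hS0 : 0 ≤ ∑ j, a j := Finset.sum_nonneg fun j _ => ha j
  rcases hS0.eq_or_lt with hS | hS
  · have hz : ∀ j ∈ Finset.univ, a j = 0 :=
      (Finset.sum_eq_zero_iff_of_nonneg (fun j _ => ha j)).1 hS.symm
    have hb : (∑ j, a j * Real.exp (t j)) = 0 :=
      Finset.sum_eq_zero fun j hj => by rw [hz j hj]; ring
    have hl : (∑ j, a j * t j) = 0 := Finset.sum_eq_zero fun j hj => by rw [hz j hj]; ring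
    have hq : (∑ j, a j * t j ^ 2) = 0 := Finset.sum_eq_zero fun j hj => by rw [hz j hj]; ring
    rw [hb, hl, hq, ← hS]
    simp [Real.zero_rpow (ne_of_gt hp0)]
  apply core_abs hp hD0 hD hS
  · exact Finset.sum_nonneg fun j _ => mul_nonneg (ha j) (sq_nonneg _)
  · calc |∑ j, a j * t j| ≤ ∑ j, |a j * t j| := Finset.abs_sum_le_sum_abs _ _
      _ ≤ ∑ j, a j * D := by
          apply Finset.sum_le_sum
          intro j _
          rw [abs_mul, abs_of_nonneg (ha j)]
          exact mul_le_mul_of_nonneg_left (ht j) (ha j)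
      _ = D * ∑ j, a j := by rw [← Finset.sum_mul]; ring
  · exact sum_sq_le_sum_mul_sum_of_sq_eq_mul Finset.univ
      (fun j _ => ha j) (fun j _ => mul_nonneg (ha j) (sq_nonneg _)) (fun j _ => by ring)
  · calc (∑ j, a j * Real.exp (t j)) ≤ ∑ j, a j * Real.exp D := by
          apply Finset.sum_le_sum
          intro j _
          exact mul_le_mul_of_nonneg_left (Real.exp_le_exp.2 ((abs_le.1 (ht j)).2)) (ha j)
      _ = Real.exp D * ∑ j, a j := by rw [← Finset.sum_mul]; ring
  · rw [← Finset.sum_add_distrib]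
    apply Finset.sum_le_sum
    intro j _
    have := Real.add_one_le_exp (t j)
    nlinarith [ha j]
  · rw [Finset.mul_sum, ← Finset.sum_add_distrib, ← Finset.sum_add_distrib]
    apply Finset.sum_le_sum
    intro j _
    have hx := exp_quad ((ht j).trans hD4)
    nlinarith [ha j]

lemma smooth {m n : ℕ} (A : Matrix (Fin m) (Fin n) ℝ) (hA : ∀ i j, 0 ≤ A i j)
    {β D : ℝ} (hβ : 0 < β) (hD0 : 0 ≤ D) (hD : D ≤ 1 / (4 * ((1 + β) / β)))
    (x d : Fin n → ℝ) (hd : ∀ j, |d j| ≤ D) :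
    fr A β (x + d) ≤ fr A β x + ∑ j, gradFr A β x j * d j
      + (14/9) * ((1 + β) / β) * ∑ j, (gradFr A β x j + 1) * d j ^ 2 := by
  set p : ℝ := (1 + β) / β with hpdef
  have hp : 1 < p := by
    rw [hpdef, lt_div_iff₀ hβ]
    linarith
  have hp0 : (0:ℝ) < p := lt_trans one_pos hp
  have hβ1 : (0:ℝ) < 1 + β := by linarith
  have hc : β / (1 + β) = 1 / p := by
    rw [hpdef]
    field_simp
  have h1β : 1 / β = p - 1 := by
    rw [hpdef]
    field_simp
    ring
  -- row sums
  have hSdef : ∀ i, A.mulVec (fun j => Real.exp (x j)) i = ∑ j, A i j * Real.exp (x j) := by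
    intro i
    simp [Matrix.mulVec, dotProduct]
  have hbdef : ∀ i, A.mulVec (fun j => Real.exp ((x + d) j)) i
      = ∑ j, (A i j * Real.exp (x j)) * Real.exp (d j) := by
    intro i
    simp only [Matrix.mulVec, dotProduct, Pi.add_apply, Real.exp_add]
    exact Finset.sum_congr rfl fun j _ => by ring
  set S : Fin m → ℝ := fun i => ∑ j, A i j * Real.exp (x j) with hS
  set G : Fin n → ℝ := fun j => ∑ i, S i ^ (p - 1) * A i j * Real.exp (x j) with hG
  have hgradG : ∀ j, gradFr A β x j = G j - 1 := by
    intro j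
    rw [gradFr, hG]
    simp only [hSdef, h1β]
    ring
  -- per-row application of core
  have hrow : ∀ i : Fin m, (∑ j, (A i j * Real.exp (x j)) * Real.exp (d j)) ^ p
      ≤ S i ^ p + p * (S i ^ (p - 1) * (∑ j, (A i j * Real.exp (x j)) * d j))
        + (14/9) * p ^ 2 * (S i ^ (p - 1) * (∑ j, (A i j * Real.exp (x j)) * d j ^ 2)) := by
    intro i
    exact core hp hD0 hD (fun j => A i j * Real.exp (x j)) d
      (fun j => mul_nonneg (hA i j) (Real.exp_nonneg _)) hd
  have hswap : ∀ f : Fin n → ℝ,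
      ∑ i, S i ^ (p - 1) * (∑ j, (A i j * Real.exp (x j)) * f j) = ∑ j, G j * f j := by
    intro f
    calc ∑ i, S i ^ (p - 1) * (∑ j, (A i j * Real.exp (x j)) * f j)
        = ∑ i, ∑ j, S i ^ (p - 1) * ((A i j * Real.exp (x j)) * f j) := by
          simp_rw [Finset.mul_sum]
      _ = ∑ j, ∑ i, S i ^ (p - 1) * ((A i j * Real.exp (x j)) * f j) := Finset.sum_comm
      _ = ∑ j, G j * f j := by
          apply Finset.sum_congr rfl
          intro j _
          rw [hG, Finset.sum_mul]
          apply Finset.sum_congr rfl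
          intro i _
          ring
  have hsum : ∑ i, (∑ j, (A i j * Real.exp (x j)) * Real.exp (d j)) ^ p
      ≤ ∑ i, S i ^ p + p * (∑ j, G j * d j) + (14/9) * p ^ 2 * (∑ j, G j * d j ^ 2) := by
    calc ∑ i, (∑ j, (A i j * Real.exp (x j)) * Real.exp (d j)) ^ p
        ≤ ∑ i, (S i ^ p + p * (S i ^ (p - 1) * (∑ j, (A i j * Real.exp (x j)) * d j))
            + (14/9) * p ^ 2 * (S i ^ (p - 1) * (∑ j, (A i j * Real.exp (x j)) * d j ^ 2))) :=
          Finset.sum_le_sum fun i _ => hrow i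
      _ = ∑ i, S i ^ p + p * (∑ j, G j * d j) + (14/9) * p ^ 2 * (∑ j, G j * d j ^ 2) := by
          rw [Finset.sum_add_distrib, Finset.sum_add_distrib, ← Finset.mul_sum, ← Finset.mul_sum,
            hswap d, hswap (fun j => d j ^ 2)]
  -- conclude
  have hfr1 : fr A β (x + d) = -(∑ j, (x j + d j))
      + (1/p) * ∑ i, (∑ j, (A i j * Real.exp (x j)) * Real.exp (d j)) ^ p := by
    rw [fr, hc]
    have e : ∑ i, (A.mulVec (fun j => Real.exp ((x + d) j)) i) ^ ((1 + β) / β)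
        = ∑ i, (∑ j, (A i j * Real.exp (x j)) * Real.exp (d j)) ^ p :=
      Finset.sum_congr rfl fun i _ => by rw [hbdef i]
    rw [e]
    norm_num [Pi.add_apply]
  have hfr0 : fr A β x = -(∑ j, x j) + (1/p) * ∑ i, S i ^ p := by
    rw [fr, hc]
    have e : ∑ i, (A.mulVec (fun j => Real.exp (x j)) i) ^ ((1 + β) / β) = ∑ i, S i ^ p :=
      Finset.sum_congr rfl fun i _ => by rw [hSdef i]
    rw [e]
  have hmul := mul_le_mul_of_nonneg_left hsum (le_of_lt (by positivity : (0:ℝ) < 1/p))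
  have hexp : (1/p) * (∑ i, S i ^ p + p * (∑ j, G j * d j) + (14/9) * p ^ 2 * (∑ j, G j * d j ^ 2))
      = (1/p) * (∑ i, S i ^ p) + (∑ j, G j * d j) + (14/9) * p * (∑ j, G j * d j ^ 2) := by
    field_simp
  rw [hexp] at hmul
  have hsplit : ∑ j, (x j + d j) = (∑ j, x j) + ∑ j, d j := Finset.sum_add_distrib
  have hgd : ∑ j, gradFr A β x j * d j = (∑ j, G j * d j) - ∑ j, d j := by
    rw [← Finset.sum_sub_distrib]
    apply Finset.sum_congr rfl
    intro j _
    rw [hgradG j]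
    ring
  have hgq : ∑ j, (gradFr A β x j + 1) * d j ^ 2 = ∑ j, G j * d j ^ 2 := by
    apply Finset.sum_congr rfl
    intro j _
    rw [hgradG j]
    ring
  rw [hfr1, hfr0, hsplit, hgd, hgq]
  linarith


lemma clip_key {ω η gbv c zz : ℝ} (hω : 0 < ω) (hη0 : 0 < η)
    (hgb1 : gbv ≤ 1) (hgb2 : -1 ≤ gbv) (hc1 : -ω ≤ c) (hc2 : c ≤ 0)
    (hzz : zz = max (-ω) (min 0 (c - ω * η * gbv))) :
    0 ≤ (c - zz) * (ω * η * gbv - (c - zz)) := by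
  rcases le_total 0 gbv with hs | hs
  · have hs0 : 0 ≤ ω * η * gbv := by positivity
    have h1 : min 0 (c - ω * η * gbv) = c - ω * η * gbv := min_eq_right (by linarith)
    rw [hzz, h1]
    have h2 : c - ω * η * gbv ≤ max (-ω) (c - ω * η * gbv) := le_max_right _ _
    have h3 : max (-ω) (c - ω * η * gbv) ≤ c := max_le (by linarith) (by linarith)
    nlinarith
  · have hs0 : ω * η * gbv ≤ 0 := mul_nonpos_of_nonneg_of_nonpos (by positivity) hs
    have h1 : max (-ω) (min 0 (c - ω * η * gbv)) = min 0 (c - ω * η * gbv) :=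
      max_eq_right (le_min (by linarith) (by linarith))
    rw [hzz, h1]
    have h2 : min 0 (c - ω * η * gbv) ≤ c - ω * η * gbv := min_le_right _ _
    have h3 : c ≤ min 0 (c - ω * η * gbv) := le_min (by linarith) (by linarith)
    nlinarith

lemma clip_wle {ω η gbv c zz : ℝ} (hω : 0 < ω) (hη0 : 0 < η)
    (hgb1 : gbv ≤ 1) (hgb2 : -1 ≤ gbv) (hc1 : -ω ≤ c) (hc2 : c ≤ 0)
    (hzz : zz = max (-ω) (min 0 (c - ω * η * gbv))) :
    |c - zz| ≤ ω * η := by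
  have hk := clip_key hω hη0 hgb1 hgb2 hc1 hc2 hzz
  have habs : gbv * (c - zz) ≤ |c - zz| := by
    calc gbv * (c - zz) ≤ |gbv * (c - zz)| := le_abs_self _
      _ = |gbv| * |c - zz| := abs_mul _ _
      _ ≤ 1 * |c - zz| := mul_le_mul_of_nonneg_right (abs_le.2 ⟨hgb2, hgb1⟩) (abs_nonneg _)
      _ = |c - zz| := one_mul _
  nlinarith [sq_abs (c - zz), abs_nonneg (c - zz), mul_pos hω hη0]

lemma percoord {ω η L p gg c uu zz : ℝ} (hω : 0 < ω) (hL : 0 < L) (hη0 : 0 < η)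
    (hη4 : η ≤ 1/4) (hp0 : 0 < p) (hpωL : p * ω ≤ L / 4) (hg1 : -1 ≤ gg)
    (hc1 : -ω ≤ c) (hc2 : c ≤ 0) (hu1 : -ω ≤ uu) (hu2 : uu ≤ 0)
    (hzz : zz = max (-ω) (min 0 (c - ω * η * min 1 gg))) :
    η * (gg - min 1 gg) * (c - uu) + η * (min 1 gg * (c - zz)) + -3 * (gg * (c - zz))
      + (14/3) * p * ((gg + 1) * (c - zz) ^ 2) / (η * L) ≤ 0 := by
  have hgb1 : min 1 gg ≤ 1 := min_le_left _ _
  have hgb2 : -1 ≤ min 1 gg := le_min (by norm_num) hg1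
  have hk := clip_key hω hη0 hgb1 hgb2 hc1 hc2 hzz
  obtain ⟨w, hw⟩ : ∃ w, w = c - zz := ⟨_, rfl⟩
  rw [← hw]
  rw [← hw] at hk
  have ha0 : 0 < η * L := mul_pos hη0 hL
  rcases le_or_gt gg 1 with hgle | hggt
  · -- ν = 0 case
    have hνz : gg - min 1 gg = 0 := by rw [min_eq_right hgle]; ring
    have hgeq : gg = min 1 gg := by linarith [min_eq_right hgle]
    have hP0 : 0 ≤ min 1 gg * w := by nlinarith [mul_pos hω hη0, sq_nonneg w]
    have hw2 : w ^ 2 ≤ ω * η * (min 1 gg * w) := by nlinarith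
    have hM : η * L * (η * (min 1 gg * w)) + η * L * (-3 * (min 1 gg * w))
        + (14/3) * p * ((min 1 gg + 1) * w ^ 2) ≤ 0 := by
      have s1 : (14/3) * p * ((min 1 gg + 1) * w ^ 2) ≤ (14/3) * p * (2 * w ^ 2) := by
        have hb2 : (min 1 gg + 1) * w ^ 2 ≤ 2 * w ^ 2 := by nlinarith [sq_nonneg w]
        exact mul_le_mul_of_nonneg_left hb2 (by positivity)
      have s2 : (14/3) * p * (2 * w ^ 2) ≤ (14/3) * p * (2 * (ω * η * (min 1 gg * w))) := by
        apply mul_le_mul_of_nonneg_left _ (by positivity)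
        linarith
      have s4 : (28/3) * (p * ω) * (η * (min 1 gg * w)) ≤ (28/3) * (L/4) * (η * (min 1 gg * w)) := by
        have hQ : 0 ≤ η * (min 1 gg * w) := mul_nonneg hη0.le hP0
        nlinarith [mul_le_mul_of_nonneg_right hpωL hQ]
      have s5 : (η * (min 1 gg * w)) * η ≤ (η * (min 1 gg * w)) * (1/4) :=
        mul_le_mul_of_nonneg_left hη4 (mul_nonneg hη0.le hP0)
      have s6 : 0 ≤ L * (η * (min 1 gg * w)) := mul_nonneg hL.le (mul_nonneg hη0.le hP0)
      nlinarith [mul_le_mul_of_nonneg_left s5 hL.le]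
    have heq : η * (gg - min 1 gg) * (c - uu) + η * (min 1 gg * w) + -3 * (gg * w)
        + (14/3) * p * ((gg + 1) * w ^ 2) / (η * L)
        = (1 / (η * L)) * (η * L * (η * (min 1 gg * w)) + η * L * (-3 * (min 1 gg * w))
          + (14/3) * p * ((min 1 gg + 1) * w ^ 2)) := by
      rw [hνz, ← hgeq]
      field_simp
      ring
    rw [heq]
    exact mul_nonpos_of_nonneg_of_nonpos (by positivity) hM
  · -- ν > 0 case : min 1 gg = 1
    have hgbeq : min 1 gg = 1 := min_eq_left hggt.le
    have hzj : zz = max (-ω) (c - ω * η * 1) := by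
      rw [hzz, hgbeq, min_eq_right (by nlinarith [mul_pos hω hη0])]
    have hk1 : 0 ≤ w * (ω * η - w) := by rw [hgbeq] at hk; linarith [hk]
    have hw0 : 0 ≤ w := by nlinarith [hk1, mul_pos hω hη0]
    have hwu : w ≤ ω * η := by nlinarith [hk1, mul_pos hω hη0]
    have hcu : η * (c - uu) ≤ w := by
      have h1 : -ω ≤ c - η * (c - uu) := by
        nlinarith [mul_nonneg (show (0:ℝ) ≤ 1 - η by linarith)
          (show (0:ℝ) ≤ c + ω by linarith),
          mul_le_mul_of_nonneg_left (show c - uu ≤ c + ω by linarith) hη0.le]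
      have h2 : c - ω * η * 1 ≤ c - η * (c - uu) := by
        nlinarith [mul_le_mul_of_nonneg_left (show c - uu ≤ ω by linarith) hη0.le]
      have h3 : zz ≤ c - η * (c - uu) := by
        rw [hzj]
        exact max_le h1 h2
      rw [hw]
      linarith
    have hw2 : w ^ 2 ≤ ω * η * w := by nlinarith [hk1]
    have hM : η * L * (η * (gg - 1) * (c - uu)) + η * L * (η * (1 * w))
        + η * L * (-3 * (gg * w)) + (14/3) * p * ((gg + 1) * w ^ 2) ≤ 0 := by
      have hg1w : 0 ≤ (gg - 1) * w := mul_nonneg (by linarith) hw0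
      have hA1 : (14/3) * p * ((gg - 1) * w ^ 2) ≤ (14/3) * p * ((gg - 1) * (ω * η * w)) := by
        apply mul_le_mul_of_nonneg_left _ (by positivity)
        exact mul_le_mul_of_nonneg_left hw2 (by linarith)
      have hA2 : (14/3) * (p * ω) * ((gg - 1) * (η * w))
          ≤ (14/3) * (L/4) * ((gg - 1) * (η * w)) := by
        have hQ : 0 ≤ (gg - 1) * (η * w) := mul_nonneg (by linarith) (mul_nonneg hη0.le hw0)
        nlinarith [mul_le_mul_of_nonneg_right hpωL hQ]
      have hB1 : (14/3) * p * (2 * w ^ 2) ≤ (14/3) * p * (2 * (ω * η * w)) := by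
        apply mul_le_mul_of_nonneg_left _ (by positivity)
        linarith
      have hB2 : (28/3) * (p * ω) * (η * w) ≤ (28/3) * (L/4) * (η * w) := by
        have hQ : 0 ≤ η * w := mul_nonneg hη0.le hw0
        nlinarith [mul_le_mul_of_nonneg_right hpωL hQ]
      have hC : η * L * (η * (gg - 1) * (c - uu)) ≤ η * L * ((gg - 1) * w) := by
        have h0 : 0 ≤ η * L * (gg - 1) := mul_nonneg (mul_nonneg hη0.le hL.le) (by linarith)
        have h5 := mul_le_mul_of_nonneg_left hcu h0
        calc η * L * (η * (gg - 1) * (c - uu))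
            = η * L * (gg - 1) * (η * (c - uu)) := by ring
          _ ≤ η * L * (gg - 1) * w := h5
          _ = η * L * ((gg - 1) * w) := by ring
      have hD1 : 0 ≤ η * L * ((gg - 1) * w) := mul_nonneg (mul_nonneg hη0.le hL.le) hg1w
      have hD2 : 0 ≤ L * (η * w) := mul_nonneg hL.le (mul_nonneg hη0.le hw0)
      linarith [mul_le_mul_of_nonneg_left hη4 hD2]
    have heq : η * (gg - min 1 gg) * (c - uu) + η * (min 1 gg * w) + -3 * (gg * w)
        + (14/3) * p * ((gg + 1) * w ^ 2) / (η * L)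
        = (1 / (η * L)) * (η * L * (η * (gg - 1) * (c - uu)) + η * L * (η * (1 * w))
          + η * L * (-3 * (gg * w)) + (14/3) * p * ((gg + 1) * w ^ 2)) := by
      rw [hgbeq]
      field_simp
    rw [heq]
    exact mul_nonpos_of_nonneg_of_nonpos (by positivity) hM


/-- Gradient descent compensates for the remaining regret: with the mirror step
`z` (clipping to `[-ω,0]`) and the gradient step `y`, the leftover regret from
the gradient truncation `ν = ∇f_r(x) - ∇̄f_r(x)` is bounded via the descent. -/
theorem gradient_descent_compensates_packing_regret {m n : ℕ}
    (A : Matrix (Fin m) (Fin n) ℝ)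
    (hA : ∀ i j, 0 ≤ A i j)
    (β ω η L : ℝ) (hβ : 0 < β) (hω : 0 < ω) (hL : 0 < L)
    (hstep : 4 * ω * (1 + β) / (β * L) ≤ 1)
    (hη0 : 0 < η) (hη4 : η ≤ 1 / 4)
    (x z0 z y : Fin n → ℝ)
    (hx : ∀ i, x i ∈ Set.Icc (-ω) 0)
    (hz0 : ∀ i, z0 i ∈ Set.Icc (-ω) 0)
    (hz : ∀ i, z i = max (-ω) (min 0 (z0 i - ω * η * min 1 (gradFr A β x i))))
    (hy : y = x + (1 / (η * L)) • (z - z0)) :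
    ∀ u : Fin n → ℝ, (∀ i, u i ∈ Set.Icc (-ω) 0) →
      (∑ i, η * (gradFr A β x i - min 1 (gradFr A β x i)) * (z0 i - u i))
        + η ^ 2 * L * ∑ i, min 1 (gradFr A β x i) * (x i - y i)
      ≤ 3 * η * L * (fr A β x - fr A β y) := by
  intro u hu
  set p : ℝ := (1 + β) / β with hpdef
  have hp : 1 < p := by rw [hpdef, lt_div_iff₀ hβ]; linarith
  have hp0 : (0:ℝ) < p := lt_trans one_pos hp
  have ha0 : (0:ℝ) < η * L := mul_pos hη0 hL
  have hstep' : 4 * ω * (1 + β) ≤ β * L := by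
    rw [div_le_one (by positivity)] at hstep
    linarith
  have hpωL : p * ω ≤ L / 4 := by
    rw [hpdef, div_mul_eq_mul_div, div_le_div_iff₀ hβ (by norm_num)]
    linarith
  have hD : ω / L ≤ 1 / (4 * p) := by
    rw [div_le_div_iff₀ hL (by positivity), one_mul]
    nlinarith
  set d : Fin n → ℝ := fun j => (z j - z0 j) / (η * L) with hd
  have hyd : y = x + d := by
    rw [hy]
    funext j
    simp [hd, Pi.add_apply, Pi.smul_apply, Pi.sub_apply, smul_eq_mul]
    ring
  have hg1 : ∀ j, -1 ≤ gradFr A β x j := by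
    intro j
    rw [gradFr]
    have h0 : 0 ≤ ∑ i, (A.mulVec (fun j' => Real.exp (x j')) i) ^ (1 / β) * A i j
        * Real.exp (x j) := by
      apply Finset.sum_nonneg
      intro i _
      have hmv : 0 ≤ A.mulVec (fun j' => Real.exp (x j')) i := by
        simp only [Matrix.mulVec, dotProduct]
        exact Finset.sum_nonneg fun j' _ => mul_nonneg (hA i j') (Real.exp_nonneg _)
      exact mul_nonneg (mul_nonneg (Real.rpow_nonneg hmv _) (hA i j)) (Real.exp_nonneg _)
    linarith
  have hwle : ∀ j, |z0 j - z j| ≤ ω * η := by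
    intro j
    exact clip_wle hω hη0 (min_le_left _ _) (le_min (by norm_num) (hg1 j))
      (hz0 j).1 (hz0 j).2 (hz j)
  have hdle : ∀ j, |d j| ≤ ω / L := by
    intro j
    have hdj : d j = (z j - z0 j) / (η * L) := rfl
    rw [hdj, abs_div, abs_of_pos ha0, div_le_div_iff₀ ha0 hL]
    have h1 : |z j - z0 j| = |z0 j - z j| := abs_sub_comm _ _
    rw [h1]
    calc |z0 j - z j| * L ≤ (ω * η) * L := mul_le_mul_of_nonneg_right (hwle j) hL.le
      _ = ω * (η * L) := by ring
  have hfr : fr A β y ≤ fr A β x + ∑ j, gradFr A β x j * d j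
      + (14/9) * p * ∑ j, (gradFr A β x j + 1) * d j ^ 2 := by
    rw [hyd]
    exact smooth A hA hβ (by positivity) hD x d hdle
  have hper : ∀ j, η * (gradFr A β x j - min 1 (gradFr A β x j)) * (z0 j - u j)
      + η ^ 2 * L * (min 1 (gradFr A β x j) * (x j - y j))
      + 3 * η * L * (gradFr A β x j * d j)
      + (14/3) * η * L * p * ((gradFr A β x j + 1) * d j ^ 2) ≤ 0 := by
    intro j
    have hxy : x j - y j = -d j := by rw [hyd]; simp
    have hdw : d j = -(z0 j - z j) / (η * L) := by
      show (z j - z0 j) / (η * L) = -(z0 j - z j) / (η * L)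
      ring_nf
    rw [hxy, hdw]
    have e1 : η ^ 2 * L * (min 1 (gradFr A β x j) * (- (-(z0 j - z j) / (η * L))))
        = η * (min 1 (gradFr A β x j) * (z0 j - z j)) := by
      field_simp
    have e2 : 3 * η * L * (gradFr A β x j * (-(z0 j - z j) / (η * L)))
        = -3 * (gradFr A β x j * (z0 j - z j)) := by
      field_simp
    have e3 : (14/3) * η * L * p * ((gradFr A β x j + 1) * (-(z0 j - z j) / (η * L)) ^ 2)
        = (14/3) * p * ((gradFr A β x j + 1) * (z0 j - z j) ^ 2) / (η * L) := by
      field_simp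
    rw [e1, e2, e3]
    exact percoord hω hL hη0 hη4 hp0 hpωL (hg1 j) (hz0 j).1 (hz0 j).2
      (hu j).1 (hu j).2 (hz j)
  have hsum : (∑ j, η * (gradFr A β x j - min 1 (gradFr A β x j)) * (z0 j - u j))
      + η ^ 2 * L * (∑ j, min 1 (gradFr A β x j) * (x j - y j))
      + 3 * η * L * (∑ j, gradFr A β x j * d j)
      + (14/3) * η * L * p * (∑ j, (gradFr A β x j + 1) * d j ^ 2) ≤ 0 := by
    rw [Finset.mul_sum, Finset.mul_sum, Finset.mul_sum, ← Finset.sum_add_distrib,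
      ← Finset.sum_add_distrib, ← Finset.sum_add_distrib]
    exact Finset.sum_nonpos fun j _ => hper j
  have hmul := mul_le_mul_of_nonneg_left hfr (by positivity : (0:ℝ) ≤ 3 * η * L)
  linarith [hsum, hmul]
end
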